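/- Let μ > 0, η̃ > 0 and set q := η̃·μ/2; assume 0 < q < 1. Let n ≥ 1 be a natural number with q·n ≥ 1, let C ≥ 0, and let Δ_0, …, Δ_n and e_0, …, e_{n−1} be nonnegative reals satisfying Δ_{t+1} ≤ (1 − q)·Δ_t − η̃·e_t + C·η̃ for every t < n. Define weights α_t := (1 − q)^{−(t+1)} for t < n. Then (∑_{t<n} α_t·e_t) / (∑_{t<n} α_t) ≤ μ·e^{−q·n}·Δ_0 + C. -/
import Mathlib


/-- Weighted-telescoping convergence lemma at the core of **Theorem 1**
(strongly convex case). -/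
theorem weighted_telescoping
    (μ ηt : ℝ) (hμ : 0 < μ) (hηt : 0 < ηt)
    (q : ℝ) (hq : q = ηt * μ / 2) (hq0 : 0 < q) (hq1 : q < 1)
    (n : ℕ) (hn : 1 ≤ n) (hqn : 1 ≤ q * n)
    (C : ℝ) (hC : 0 ≤ C)
    (Δ e : ℕ → ℝ)
    (hΔ : ∀ t ≤ n, 0 ≤ Δ t) (he : ∀ t < n, 0 ≤ e t)
    (hrec : ∀ t < n, Δ (t + 1) ≤ (1 - q) * Δ t - ηt * e t + C * ηt)
    (α : ℕ → ℝ) (hα : ∀ t, α t = (1 - q) ^ (-(t + 1 : ℤ))) :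
    (∑ t ∈ Finset.range n, α t * e t) / (∑ t ∈ Finset.range n, α t)
      ≤ μ * Real.exp (-(q * n)) * Δ 0 + C := by
  set r : ℝ := 1 - q with hrdef
  have hr0 : 0 < r := by rw [hrdef]; linarith
  have hrne : r ≠ 0 := ne_of_gt hr0
  set f : ℕ → ℝ := fun t => r ^ (-(t : ℤ)) with hf
  have hfpos : ∀ t, 0 < f t := fun t => zpow_pos hr0 _
  have hαf : ∀ t, α t = f (t + 1) := by
    intro t
    rw [hα]
    simp only [hf]
    push_cast
    ring_nf
  have hstep : ∀ t, f (t + 1) * r = f t := by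
    intro t
    simp only [hf]
    have h : (-(t : ℤ)) = (-((t : ℤ) + 1)) + 1 := by ring
    rw [h, zpow_add_one₀ hrne]
    push_cast
    ring_nf
  set S : ℝ := ∑ t ∈ Finset.range n, α t with hS
  set E : ℝ := ∑ t ∈ Finset.range n, α t * e t with hE
  have hSpos : 0 < S := by
    apply Finset.sum_pos
    · intro t _
      rw [hαf]; exact hfpos _
    · exact Finset.nonempty_range_iff.mpr (by omega)
  -- geometric sum: q * S = f n - 1
  have hqS : q * S = f n - 1 := by
    have h1 : q * S = ∑ t ∈ Finset.range n, (f (t + 1) - f t) := by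
      rw [hS, Finset.mul_sum]
      apply Finset.sum_congr rfl
      intro t _
      rw [hαf]
      have hqr : q = 1 - r := by rw [hrdef]; ring
      rw [hqr]
      linear_combination -hstep t
    rw [h1, Finset.sum_range_sub f]
    have : f 0 = 1 := by simp [hf]
    rw [this]
  -- telescoping of the recursion
  have hg : ∀ t < n, f (t + 1) * Δ (t + 1) - f t * Δ t ≤ ηt * (C - e t) * α t := by
    intro t ht
    have h1 : f (t + 1) * Δ (t + 1) ≤ f (t + 1) * ((1 - q) * Δ t - ηt * e t + C * ηt) :=
      mul_le_mul_of_nonneg_left (hrec t ht) (le_of_lt (hfpos _))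
    have h2 : f (t + 1) * ((1 - q) * Δ t - ηt * e t + C * ηt)
        = f t * Δ t + ηt * (C - e t) * α t := by
      rw [hαf, ← hrdef]
      linear_combination Δ t * hstep t
    linarith
  have hsum : f n * Δ n - f 0 * Δ 0 ≤ ∑ t ∈ Finset.range n, ηt * (C - e t) * α t := by
    rw [← Finset.sum_range_sub (fun t => f t * Δ t)]
    exact Finset.sum_le_sum fun t ht => hg t (Finset.mem_range.mp ht)
  have hsplit : ∑ t ∈ Finset.range n, ηt * (C - e t) * α t = ηt * C * S - ηt * E := by
    rw [hS, hE, Finset.mul_sum, Finset.mul_sum, ← Finset.sum_sub_distrib]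
    apply Finset.sum_congr rfl
    intro t _
    ring
  have hf0 : f 0 = 1 := by simp [hf]
  have hfnΔ : 0 ≤ f n * Δ n := mul_nonneg (hfpos n).le (hΔ n le_rfl)
  have hEbound : ηt * E ≤ Δ 0 + ηt * C * S := by
    rw [hsplit] at hsum
    rw [hf0] at hsum
    linarith
  -- exponential bounds
  set A : ℝ := Real.exp (q * n) with hA
  have hA0 : 0 < A := Real.exp_pos _
  have hfn : A ≤ f n := by
    have h1 : r ≤ Real.exp (-q) := by
      have := Real.add_one_le_exp (-q)
      rw [hrdef]; linarith
    have h2 : r ^ n ≤ Real.exp (-q) ^ n := pow_le_pow_left₀ hr0.le h1 n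
    have h3 : Real.exp (-q) ^ n = Real.exp (-(q * n)) := by
      rw [← Real.exp_nat_mul]; ring_nf
    have h4 : r ^ n ≤ Real.exp (-(q * n)) := by rw [← h3]; exact h2
    have hfneq : f n = (r ^ n)⁻¹ := by
      simp only [hf]
      rw [zpow_neg, zpow_natCast]
    have hrn : 0 < r ^ n := pow_pos hr0 n
    have h5 : r ^ n ≤ A⁻¹ := by rw [hA, ← Real.exp_neg]; exact h4
    rw [hfneq]
    exact (le_inv_comm₀ hA0 hrn).mpr h5
  have h2A : (2 : ℝ) ≤ A := by
    have h1 : Real.exp 1 ≤ A := Real.exp_le_exp.mpr hqn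
    have h2 : (2 : ℝ) ≤ Real.exp 1 := by
      have := Real.add_one_le_exp 1
      linarith
    linarith
  -- key: A ≤ ηt * μ * S
  have hAS : A ≤ ηt * μ * S := by
    have h1 : ηt * μ * S = 2 * (q * S) := by rw [hq]; ring
    rw [h1, hqS]
    linarith
  -- conclude
  rw [div_le_iff₀ hSpos]
  have hexp : Real.exp (-(q * n)) = A⁻¹ := by rw [hA, ← Real.exp_neg]
  rw [hexp]
  have hkey : ηt⁻¹ ≤ μ * A⁻¹ * S := by
    rw [inv_le_iff_one_le_mul₀ hηt] at *
    have hAinv : 0 < A⁻¹ := inv_pos.mpr hA0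
    have := mul_le_mul_of_nonneg_left hAS (le_of_lt (mul_pos hAinv (inv_pos.mpr hηt)))
    have hAA : A⁻¹ * A = 1 := inv_mul_cancel₀ (ne_of_gt hA0)
    have hηη : ηt⁻¹ * ηt = 1 := inv_mul_cancel₀ (ne_of_gt hηt)
    nlinarith [this, hAA, hηη]
  have hΔ0 : 0 ≤ Δ 0 := hΔ 0 (by omega)
  have h5 : Δ 0 * ηt⁻¹ ≤ Δ 0 * (μ * A⁻¹ * S) := mul_le_mul_of_nonneg_left hkey hΔ0
  have h6 : E ≤ Δ 0 * ηt⁻¹ + C * S := by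
    have hηinv : 0 < ηt⁻¹ := inv_pos.mpr hηt
    have := mul_le_mul_of_nonneg_left hEbound hηinv.le
    have hηη : ηt⁻¹ * ηt = 1 := inv_mul_cancel₀ (ne_of_gt hηt)
    nlinarith [this, hηη]
  calc E ≤ Δ 0 * ηt⁻¹ + C * S := h6
    _ ≤ Δ 0 * (μ * A⁻¹ * S) + C * S := by linarith
    _ = (μ * A⁻¹ * Δ 0 + C) * S := by ring
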